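/- Let A ∈ ℝ^{m×n}, M ∈ ℝ^{m×q}, y ∈ ℝ^m and τ > 0, and suppose the feasible set {x : φ(Mᵀ(Ax − y)) ≤ τ} is nonempty. Let ϱ* be the optimal value of the Dantzig selector problem min{‖x‖₁ : φ(Mᵀ(Ax − y)) ≤ τ}, and let S* = {x ∈ ℝⁿ : ‖x‖₁ ≤ ϱ*, φ(Mᵀ(Ax − y)) ≤ τ} be its solution set. Let (ε_j)_{j≥1} be a strictly decreasing sequence of positive numbers with ε_j → 0, and let (Q_j)_{j≥1} be closed convex subsets of ℝ^q with Q_{j+1} ⊆ Q_j and 𝔅^φ ⊆ Q_j ⊆ (1+ε_j)·𝔅^φ for every j. Define S_j = {x ∈ ℝⁿ : ‖x‖₁ ≤ ϱ*, Mᵀ(Ax − y)/τ ∈ Q_j}. Then d^H(S*, S_j) → 0 as j → ∞. -/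

import Mathlib

open Matrix Filter Topology Pointwise

/-- The ℓ₁ norm on `Fin n → ℝ`. -/
noncomputable def l1norm {n : ℕ} (x : Fin n → ℝ) : ℝ := ∑ i, |x i|

/-- The Euclidean (ℓ₂) norm on `Fin n → ℝ`. -/
noncomputable def l2norm {n : ℕ} (x : Fin n → ℝ) : ℝ := Real.sqrt (∑ i, (x i) ^ 2)

/-- The Hausdorff distance (w.r.t. the Euclidean norm) between subsets of `Fin n → ℝ`. -/
noncomputable def hausdorffD {n : ℕ} (S T : Set (Fin n → ℝ)) : ℝ :=
  max (sSup {d : ℝ | ∃ u ∈ S, d = sInf {e : ℝ | ∃ z ∈ T, e = l2norm (u - z)}})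
      (sSup {d : ℝ | ∃ z ∈ T, d = sInf {e : ℝ | ∃ u ∈ S, e = l2norm (u - z)}})

/-- `φ` is a norm on `Fin q → ℝ`. -/
structure IsNorm {q : ℕ} (φ : (Fin q → ℝ) → ℝ) : Prop where
  nonneg : ∀ x, 0 ≤ φ x
  eq_zero_iff : ∀ x, φ x = 0 ↔ x = 0
  smul_eq : ∀ (c : ℝ) (x), φ (c • x) = |c| * φ x
  triangle : ∀ x y, φ (x + y) ≤ φ x + φ y

/-- The dual norm `φ*(u) = sup {uᵀx : φ(x) ≤ 1}`. -/
noncomputable def dualNorm {q : ℕ} (φ : (Fin q → ℝ) → ℝ) (u : Fin q → ℝ) : ℝ :=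
  sSup {t : ℝ | ∃ x : Fin q → ℝ, φ x ≤ 1 ∧ t = ∑ i, u i * x i}

/-- The `i`-th standard basis vector of `ℝ^q`. -/
def stdBasis {q : ℕ} (i : Fin q) : Fin q → ℝ := fun j => if j = i then 1 else 0


lemma l2norm_nonneg {k : ℕ} (x : Fin k → ℝ) : 0 ≤ l2norm x := Real.sqrt_nonneg _

lemma l2norm_zero {k : ℕ} : l2norm (0 : Fin k → ℝ) = 0 := by simp [l2norm]

lemma l2norm_continuous {k : ℕ} : Continuous (l2norm (n := k)) :=
  (continuous_finset_sum _ fun i _ => (continuous_apply i).pow 2).sqrt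

lemma l1norm_continuous {k : ℕ} : Continuous (l1norm (n := k)) :=
  continuous_finset_sum _ fun i _ => (continuous_apply i).abs

lemma l1norm_nonneg {k : ℕ} (x : Fin k → ℝ) : 0 ≤ l1norm x :=
  Finset.sum_nonneg fun i _ => abs_nonneg _

lemma norm_le_l1norm {k : ℕ} (x : Fin k → ℝ) : ‖x‖ ≤ l1norm x := by
  refine (pi_norm_le_iff_of_nonneg (l1norm_nonneg x)).2 fun i => ?_
  rw [Real.norm_eq_abs]
  exact Finset.single_le_sum (f := fun i => |x i|) (fun j _ => abs_nonneg _) (Finset.mem_univ i)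

lemma IsNorm.sum_le {q : ℕ} {φ : (Fin q → ℝ) → ℝ} (hφ : IsNorm φ) {ι : Type*}
    (s : Finset ι) (f : ι → Fin q → ℝ) : φ (∑ i ∈ s, f i) ≤ ∑ i ∈ s, φ (f i) := by
  classical
  induction s using Finset.induction with
  | empty => simp [(hφ.eq_zero_iff 0).2 rfl]
  | insert _ _ h ih =>
    rw [Finset.sum_insert h, Finset.sum_insert h]
    exact (hφ.triangle _ _).trans (by linarith)

lemma IsNorm.le_sum_abs {q : ℕ} {φ : (Fin q → ℝ) → ℝ} (hφ : IsNorm φ)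
    (hbasis : ∀ i : Fin q, φ (_root_.stdBasis i) = 1) (x : Fin q → ℝ) :
    φ x ≤ ∑ i, |x i| := by
  have hx : x = ∑ i, x i • _root_.stdBasis i := by
    funext j
    simp [_root_.stdBasis, Finset.sum_apply, mul_ite, Finset.sum_ite_eq']
  calc φ x = φ (∑ i, x i • _root_.stdBasis i) := by rw [← hx]
    _ ≤ ∑ i, φ (x i • _root_.stdBasis i) := hφ.sum_le _ _
    _ = ∑ i, |x i| := by simp [hφ.smul_eq, hbasis]

lemma IsNorm.continuous {q : ℕ} {φ : (Fin q → ℝ) → ℝ} (hφ : IsNorm φ)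
    (hbasis : ∀ i : Fin q, φ (_root_.stdBasis i) = 1) : Continuous φ := by
  have hdiff : ∀ a b : Fin q → ℝ, φ a - φ b ≤ ∑ i, |a i - b i| := by
    intro a b
    have h1 : φ a ≤ φ b + φ (a - b) := by
      have := hφ.triangle b (a - b)
      simpa using this
    have := hφ.le_sum_abs hbasis (a - b)
    simp only [Pi.sub_apply] at this
    linarith
  refine (LipschitzWith.of_dist_le_mul (K := q) fun a b => ?_).continuous
  have h1 := hdiff a b
  have h2 := hdiff b a
  have habs : |φ a - φ b| ≤ ∑ i, |a i - b i| := by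
    rw [abs_sub_le_iff]
    exact ⟨h1, h2.trans_eq (by simp [abs_sub_comm])⟩
  have hsum : ∑ i : Fin q, |a i - b i| ≤ (q : ℝ) * dist a b := by
    calc ∑ i : Fin q, |a i - b i| ≤ ∑ _i : Fin q, dist a b :=
        Finset.sum_le_sum fun i _ => by
          rw [← Real.dist_eq]; exact dist_le_pi_dist a b i
      _ = (q : ℝ) * dist a b := by simp [mul_comm]
  rw [Real.dist_eq]
  push_cast
  exact habs.trans hsum

/-- Lemma 4.3: the relaxed solution sets `S_j` converge to the solution set `S*`
of the nonlinear Dantzig selector in Hausdorff distance. -/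
theorem DS_relaxation_hausdorff_convergence (m n q : ℕ)
    (A : Matrix (Fin m) (Fin n) ℝ) (M : Matrix (Fin m) (Fin q) ℝ)
    (y : Fin m → ℝ) (τ : ℝ) (hτ : 0 < τ)
    (φ : (Fin q → ℝ) → ℝ) (hφ : IsNorm φ)
    (hbasis : ∀ i : Fin q, φ (stdBasis i) = 1)
    (hdbasis : ∀ i : Fin q, dualNorm φ (stdBasis i) = 1)
    (hfeas : ∃ x : Fin n → ℝ, φ (Mᵀ.mulVec (A.mulVec x - y)) ≤ τ)
    (ϱ : ℝ)
    (hϱ : ϱ = sInf {t : ℝ | ∃ x : Fin n → ℝ,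
      φ (Mᵀ.mulVec (A.mulVec x - y)) ≤ τ ∧ t = l1norm x})
    (ε : ℕ → ℝ) (hεpos : ∀ j, 0 < ε j) (hεanti : StrictAnti ε)
    (hεlim : Tendsto ε atTop (𝓝 0))
    (Q : ℕ → Set (Fin q → ℝ))
    (hQclosed : ∀ j, IsClosed (Q j)) (hQconv : ∀ j, Convex ℝ (Q j))
    (hQnested : ∀ j, Q (j + 1) ⊆ Q j)
    (hBQ : ∀ j, {u : Fin q → ℝ | φ u ≤ 1} ⊆ Q j)
    (hQB : ∀ j, Q j ⊆ (1 + ε j) • {u : Fin q → ℝ | φ u ≤ 1}) :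
    Tendsto (fun j =>
        hausdorffD
          {x : Fin n → ℝ | l1norm x ≤ ϱ ∧ φ (Mᵀ.mulVec (A.mulVec x - y)) ≤ τ}
          {x : Fin n → ℝ | l1norm x ≤ ϱ ∧ τ⁻¹ • Mᵀ.mulVec (A.mulVec x - y) ∈ Q j})
      atTop (𝓝 0) := by
  classical
  set v : (Fin n → ℝ) → (Fin q → ℝ) := fun x => Mᵀ.mulVec (A.mulVec x - y) with hv
  set Sstar : Set (Fin n → ℝ) :=
    {x : Fin n → ℝ | l1norm x ≤ ϱ ∧ φ (Mᵀ.mulVec (A.mulVec x - y)) ≤ τ} with hSstar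
  set SS : ℕ → Set (Fin n → ℝ) :=
    fun j => {x : Fin n → ℝ | l1norm x ≤ ϱ ∧ τ⁻¹ • Mᵀ.mulVec (A.mulVec x - y) ∈ Q j} with hSS
  show Tendsto (fun j => hausdorffD Sstar (SS j)) atTop (𝓝 0)
  -- continuity facts
  have hvcont : Continuous v :=
    Continuous.matrix_mulVec continuous_const
      ((Continuous.matrix_mulVec continuous_const continuous_id).sub continuous_const)
  have hφcont : Continuous φ := hφ.continuous hbasis
  have hmem_star : ∀ x, x ∈ Sstar ↔ l1norm x ≤ ϱ ∧ φ (v x) ≤ τ := fun x => Iff.rfl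
  have hmem_SS : ∀ j x, x ∈ SS j ↔ l1norm x ≤ ϱ ∧ τ⁻¹ • v x ∈ Q j := fun j x => Iff.rfl
  -- closedness
  have hSstar_closed : IsClosed Sstar :=
    IsClosed.inter (isClosed_le l1norm_continuous continuous_const)
      (isClosed_le (hφcont.comp hvcont) continuous_const)
  have hSS_closed : ∀ j, IsClosed (SS j) := fun j =>
    IsClosed.inter (isClosed_le l1norm_continuous continuous_const)
      ((hQclosed j).preimage (hvcont.const_smul τ⁻¹))
  -- monotonicity
  have hQmono : Antitone Q := antitone_nat_of_succ_le hQnested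
  have hSSmono : ∀ {i j : ℕ}, i ≤ j → SS j ⊆ SS i := by
    intro i j hij x hx
    exact ⟨hx.1, hQmono hij hx.2⟩
  -- S* ⊆ S_j
  have hsub : ∀ j, Sstar ⊆ SS j := by
    intro j x hx
    refine ⟨hx.1, hBQ j ?_⟩
    show φ (τ⁻¹ • v x) ≤ 1
    rw [hφ.smul_eq, abs_of_pos (inv_pos.2 hτ)]
    calc τ⁻¹ * φ (v x) ≤ τ⁻¹ * τ :=
        mul_le_mul_of_nonneg_left hx.2 (inv_pos.2 hτ).le
      _ = 1 := inv_mul_cancel₀ hτ.ne'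
  -- attainment of the minimum
  obtain ⟨x0, hx0⟩ := hfeas
  have hFdef : IsCompact {x : Fin n → ℝ | φ (v x) ≤ τ ∧ l1norm x ≤ l1norm x0} := by
    refine Metric.isCompact_of_isClosed_isBounded
      (IsClosed.inter (isClosed_le (hφcont.comp hvcont) continuous_const)
        (isClosed_le l1norm_continuous continuous_const)) ?_
    refine (Metric.isBounded_closedBall (x := (0 : Fin n → ℝ)) (r := l1norm x0)).subset ?_
    intro x hx
    exact mem_closedBall_zero_iff.2 ((norm_le_l1norm x).trans hx.2)
  have hFne : {x : Fin n → ℝ | φ (v x) ≤ τ ∧ l1norm x ≤ l1norm x0}.Nonempty :=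
    ⟨x0, hx0, le_refl _⟩
  obtain ⟨xs, hxsF, hxsmin⟩ := hFdef.exists_isMinOn hFne l1norm_continuous.continuousOn
  have hTbdd : BddBelow {t : ℝ | ∃ x : Fin n → ℝ, φ (v x) ≤ τ ∧ t = l1norm x} :=
    ⟨0, fun t ⟨x, _, ht⟩ => ht ▸ l1norm_nonneg x⟩
  have hϱeq : ϱ = l1norm xs := by
    rw [hϱ]
    refine le_antisymm (csInf_le hTbdd ⟨xs, hxsF.1, rfl⟩) ?_
    refine le_csInf ⟨l1norm x0, x0, hx0, rfl⟩ ?_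
    rintro t ⟨x, hxf, rfl⟩
    by_cases hc : l1norm x ≤ l1norm x0
    · exact hxsmin (⟨hxf, hc⟩ : x ∈ {x : Fin n → ℝ | φ (v x) ≤ τ ∧ l1norm x ≤ l1norm x0})
    · have h1 : l1norm xs ≤ l1norm x0 :=
        hxsmin (⟨hx0, le_refl _⟩ : x0 ∈ {x : Fin n → ℝ | φ (v x) ≤ τ ∧ l1norm x ≤ l1norm x0})
      exact h1.trans (le_of_not_ge hc)
  have hϱnn : 0 ≤ ϱ := hϱeq ▸ l1norm_nonneg xs
  have hxs_star : xs ∈ Sstar := ⟨le_of_eq hϱeq.symm, hxsF.1⟩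
  -- the compact ambient set
  have hK : IsCompact (Metric.closedBall (0 : Fin n → ℝ) ϱ) := isCompact_closedBall _ _
  have hSK : ∀ j, SS j ⊆ Metric.closedBall (0 : Fin n → ℝ) ϱ := fun j x hx =>
    mem_closedBall_zero_iff.2 ((norm_le_l1norm x).trans hx.1)
  -- key uniform estimate
  have key : ∀ δ : ℝ, 0 < δ → ∃ N : ℕ, ∀ j ≥ N, ∀ z ∈ SS j,
      sInf {e : ℝ | ∃ u ∈ Sstar, e = l2norm (u - z)} ≤ δ := by
    intro δ hδ
    by_contra hcon
    push_neg at hcon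
    choose j hjge z hzmem hzd using hcon
    have hzK : ∀ N, z N ∈ Metric.closedBall (0 : Fin n → ℝ) ϱ := fun N => hSK _ (hzmem N)
    obtain ⟨a, haK, ψ, hψ, hlim⟩ := hK.tendsto_subseq hzK
    have haS : ∀ i, a ∈ SS i := by
      intro i
      refine (hSS_closed i).mem_of_tendsto hlim (eventually_atTop.2 ⟨i, fun k hk => ?_⟩)
      exact hSSmono (hk.trans (hψ.le_apply.trans (hjge (ψ k)))) (hzmem (ψ k))
    have haStar : a ∈ Sstar := by
      refine ⟨(haS 0).1, ?_⟩
      have hb : ∀ i, φ (v a) ≤ τ * (1 + ε i) := by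
        intro i
        obtain ⟨b, hb1, hb2⟩ := hQB i (haS i).2
        have hb1' : φ b ≤ 1 := hb1
        have hb2' : (1 + ε i) • b = τ⁻¹ • v a := hb2
        have h2 : φ ((1 + ε i) • b) ≤ 1 + ε i := by
          rw [hφ.smul_eq, abs_of_pos (by linarith [hεpos i])]
          nlinarith [hφ.nonneg b, hεpos i]
        rw [hb2'] at h2
        rw [hφ.smul_eq, abs_of_pos (inv_pos.2 hτ)] at h2
        calc φ (v a) = τ * (τ⁻¹ * φ (v a)) := by
              rw [← mul_assoc, mul_inv_cancel₀ hτ.ne', one_mul]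
          _ ≤ τ * (1 + ε i) := mul_le_mul_of_nonneg_left h2 hτ.le
      have hlim' : Tendsto (fun i => τ * (1 + ε i)) atTop (𝓝 (τ * (1 + 0))) :=
        Tendsto.const_mul τ ((tendsto_const_nhds (x := (1:ℝ))).add hεlim)
      rw [add_zero, mul_one] at hlim'
      exact ge_of_tendsto hlim' (Eventually.of_forall hb)
    have hdist : Tendsto (fun k => l2norm (a - z (ψ k))) atTop (𝓝 0) := by
      have h1 : Tendsto (fun k => a - (z ∘ ψ) k) atTop (𝓝 (a - a)) :=
        tendsto_const_nhds.sub hlim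
      rw [sub_self] at h1
      have h2 := (l2norm_continuous.tendsto 0).comp h1
      rw [l2norm_zero] at h2
      exact h2
    obtain ⟨k, hk⟩ := (hdist.eventually (gt_mem_nhds hδ)).exists
    have hle : sInf {e : ℝ | ∃ u ∈ Sstar, e = l2norm (u - z (ψ k))} ≤ l2norm (a - z (ψ k)) :=
      csInf_le ⟨0, fun e ⟨u, _, he⟩ => he ▸ l2norm_nonneg _⟩ ⟨a, haStar, rfl⟩
    have := hzd (ψ k)
    linarith
  -- conclude
  rw [Metric.tendsto_atTop]
  intro δ hδ
  obtain ⟨N, hN⟩ := key (δ/2) (by linarith)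
  refine ⟨N, fun j hj => ?_⟩
  have hinf0 : ∀ u ∈ Sstar, sInf {e : ℝ | ∃ zz ∈ SS j, e = l2norm (u - zz)} = 0 := by
    intro u hu
    have h0mem : (0 : ℝ) ∈ {e : ℝ | ∃ zz ∈ SS j, e = l2norm (u - zz)} :=
      ⟨u, hsub j hu, by rw [sub_self, l2norm_zero]⟩
    refine le_antisymm (csInf_le ⟨0, fun e ⟨zz, _, he⟩ => he ▸ l2norm_nonneg _⟩ h0mem) ?_
    exact le_csInf ⟨0, h0mem⟩ fun e ⟨zz, _, he⟩ => he ▸ l2norm_nonneg _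
  have hD1 : sSup {d : ℝ | ∃ u ∈ Sstar, d = sInf {e : ℝ | ∃ zz ∈ SS j, e = l2norm (u - zz)}}
      = 0 := by
    have hset : {d : ℝ | ∃ u ∈ Sstar, d = sInf {e : ℝ | ∃ zz ∈ SS j, e = l2norm (u - zz)}}
        = {0} := by
      ext d
      constructor
      · rintro ⟨u, hu, rfl⟩
        exact hinf0 u hu
      · rintro rfl
        exact ⟨xs, hxs_star, (hinf0 xs hxs_star).symm⟩
    rw [hset, csSup_singleton]
  have hD2 : sSup {d : ℝ | ∃ zz ∈ SS j, d = sInf {e : ℝ | ∃ u ∈ Sstar, e = l2norm (u - zz)}}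
      ≤ δ / 2 := by
    refine Real.sSup_le ?_ (by linarith)
    rintro d ⟨zz, hzz, rfl⟩
    exact hN j hj zz hzz
  have hfj : hausdorffD Sstar (SS j) ≤ δ / 2 := by
    rw [hausdorffD, hD1]
    exact max_le (by linarith) hD2
  have hfj0 : 0 ≤ hausdorffD Sstar (SS j) := by
    rw [hausdorffD, hD1]
    exact le_max_left _ _
  rw [Real.dist_eq, sub_zero, abs_of_nonneg hfj0]
  linarith
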